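/- Let A and B be n × n Hermitian complex matrices with −B ≤ A ≤ B in the Loewner order. Then ‖A‖₁ ≤ Tr B. -/

import Mathlib

open Matrix Filter
open scoped ComplexOrder

noncomputable section

/-- The square root of a positive semidefinite matrix (the former `Matrix.PosSemidef.sqrt`). -/
def posSemidefSqrt {m : Type*} [Fintype m] [DecidableEq m] {A : Matrix m m ℂ}
    (hA : A.PosSemidef) : Matrix m m ℂ :=
  (hA.1.eigenvectorUnitary : Matrix m m ℂ) *
    diagonal ((↑) ∘ (Real.sqrt ∘ hA.1.eigenvalues)) *
    (star (hA.1.eigenvectorUnitary : Matrix m m ℂ))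

/-- The trace norm `‖A‖₁ = Tr √(AᴴA)` of a complex square matrix. -/
def traceNorm {m : Type*} [Fintype m] [DecidableEq m] (A : Matrix m m ℂ) : ℝ :=
  (posSemidefSqrt (Matrix.posSemidef_conjTranspose_mul_self A)).trace.re

/-- Spectral radius of a map on a complex vector space:
the supremum of the moduli of its eigenvalues. -/
def specRad {M : Type*} [Zero M] [SMul ℂ M] (T : M → M) : ℝ :=
  sSup {r : ℝ | ∃ (c : ℂ) (v : M), v ≠ 0 ∧ T v = c • v ∧ r = ‖c‖}

/-- A linear map on square matrices is positive if it maps positive semidefinite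
matrices to positive semidefinite matrices. -/
def IsPosMap {m : Type*} [Fintype m] (T : Matrix m m ℂ →ₗ[ℂ] Matrix m m ℂ) : Prop :=
  ∀ A : Matrix m m ℂ, A.PosSemidef → (T A).PosSemidef

/-- `sup(x/y) = inf {λ ≥ 0 : x ≤ λ y}` (in `[0,∞]`, with the Loewner order). -/
def supRatio {m : Type*} [Fintype m] (x y : Matrix m m ℂ) : ENNReal :=
  sInf {r : ENNReal | ∃ c : ℝ, 0 ≤ c ∧ r = ENNReal.ofReal c ∧ (c • y - x).PosSemidef}

/-- `inf(x/y) = sup {λ ≥ 0 : λ y ≤ x}` (in `[0,∞]`, with the Loewner order). -/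
def infRatio {m : Type*} [Fintype m] (x y : Matrix m m ℂ) : ENNReal :=
  sSup {r : ENNReal | ∃ c : ℝ, 0 ≤ c ∧ r = ENNReal.ofReal c ∧ (x - c • y).PosSemidef}

/-- The Hilbert projective metric `d_H(x,y) = log (sup(x/y) / inf(x/y)) ∈ [0,∞]`. -/
def dH {m : Type*} [Fintype m] (x y : Matrix m m ℂ) : EReal :=
  ENNReal.log (supRatio x y / infRatio x y)

/-- The projective diameter `Δ(T) = sup { d_H(T x, T y) : x, y PSD nonzero }`. -/
def DeltaT {m : Type*} [Fintype m] (T : Matrix m m ℂ →ₗ[ℂ] Matrix m m ℂ) : EReal :=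
  sSup {e : EReal | ∃ x y : Matrix m m ℂ,
    x.PosSemidef ∧ x ≠ 0 ∧ y.PosSemidef ∧ y ≠ 0 ∧ e = dH (T x) (T y)}

end

/-- If `A`, `B` are Hermitian with `-B ≤ A ≤ B` in the Loewner order,
then `‖A‖₁ ≤ Tr B`. -/
theorem stmt13 (n : ℕ) (A B : Matrix (Fin n) (Fin n) ℂ)
    (hA : A.IsHermitian) (hB : B.IsHermitian)
    (h1 : (A - (-B)).PosSemidef) (h2 : (B - A).PosSemidef) :
    traceNorm A ≤ B.trace.re := by
  classical
  set U : Matrix (Fin n) (Fin n) ℂ := (hA.eigenvectorUnitary : Matrix (Fin n) (Fin n) ℂ) with hUdef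
  set lam : Fin n → ℝ := hA.eigenvalues with hlam
  have hUUs : U * star U = 1 :=
    Matrix.mem_unitaryGroup_iff.mp hA.eigenvectorUnitary.2
  have hsUU : star U * U = 1 :=
    Matrix.mem_unitaryGroup_iff'.mp hA.eigenvectorUnitary.2
  have hspec : star U * A * U = Matrix.diagonal (Complex.ofReal ∘ lam) :=
    by simpa [Unitary.conjStarAlgAut_star_apply, Matrix.mul_assoc] using
      hA.conjStarAlgAut_star_eigenvectorUnitary
  -- the candidate square root of AᴴA
  set P : Matrix (Fin n) (Fin n) ℂ :=
    U * Matrix.diagonal (fun i => ((|lam i| : ℝ) : ℂ)) * star U with hPdef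
  have hPsd : P.PosSemidef := by
    rw [hPdef, Matrix.star_eq_conjTranspose]
    exact Matrix.PosSemidef.mul_mul_conjTranspose_same
      (Matrix.posSemidef_diagonal_iff.mpr fun i =>
        Complex.zero_le_real.mpr (abs_nonneg _)) U
  have key : ∀ d e : Fin n → ℂ,
      (U * Matrix.diagonal d * star U) * (U * Matrix.diagonal e * star U)
        = U * Matrix.diagonal (fun i => d i * e i) * star U := by
    intro d e
    simp only [Matrix.mul_assoc]
    rw [← Matrix.mul_assoc (star U) U, hsUU, Matrix.one_mul,
      ← Matrix.mul_assoc (Matrix.diagonal d) (Matrix.diagonal e),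
      Matrix.diagonal_mul_diagonal]
  have hP2 : P ^ 2 = Aᴴ * A := by
    have hAeq : A = U * Matrix.diagonal (Complex.ofReal ∘ lam) * star U :=
      hA.spectral_theorem
    rw [pow_two, hPdef, key, hA.eq]
    conv_rhs => rw [hAeq]
    rw [key]
    have hf : (fun i => ((|lam i| : ℝ) : ℂ) * ((|lam i| : ℝ) : ℂ))
        = fun i => (Complex.ofReal ∘ lam) i * (Complex.ofReal ∘ lam) i := by
      funext i
      simp only [Function.comp_apply, ← Complex.ofReal_mul, abs_mul_abs_self]
    rw [hf]
  have hsq : P = posSemidefSqrt (Matrix.posSemidef_conjTranspose_mul_self A) := by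
    have e1 : posSemidefSqrt (Matrix.posSemidef_conjTranspose_mul_self A) = cfc Real.sqrt (Aᴴ * A) := by
      rw [(Matrix.posSemidef_conjTranspose_mul_self A).1.cfc_eq]; rfl
    have e2 : P = cfc (fun x : ℝ => |x|) A := by
      rw [hA.cfc_eq]; rfl
    have e3 : Aᴴ * A = cfc (fun x : ℝ => x * x) A := by
      rw [cfc_mul (fun x : ℝ => x) (fun x : ℝ => x) A, cfc_id' ℝ A, hA.eq]
    rw [e1, e2, e3, ← cfc_comp' Real.sqrt (fun x : ℝ => x * x) A]
    exact cfc_congr fun x _ => by simp [Real.sqrt_mul_self_eq_abs]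
  have htrP : P.trace = ((∑ i, |lam i| : ℝ) : ℂ) := by
    rw [hPdef, Matrix.trace_mul_cycle, hsUU, Matrix.one_mul, Matrix.trace_diagonal]
    push_cast
    rfl
  have hTN : traceNorm A = ∑ i, |lam i| := by
    rw [traceNorm, ← hsq, htrP, Complex.ofReal_re]
  -- diagonal entries of star U * B * U dominate |lam i|
  have hdiag : ∀ i, |lam i| ≤ ((star U * B * U) i i).re := by
    intro i
    have e2 : star U * (B - A) * U = star U * B * U - Matrix.diagonal (Complex.ofReal ∘ lam) := by
      rw [Matrix.mul_sub, Matrix.sub_mul, hspec]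
    have e1 : star U * (A - (-B)) * U = Matrix.diagonal (Complex.ofReal ∘ lam) + star U * B * U := by
      rw [sub_neg_eq_add, Matrix.mul_add, Matrix.add_mul, hspec]
    have p2 := h2.conjTranspose_mul_mul_same U
    have p1 := h1.conjTranspose_mul_mul_same U
    rw [← Matrix.star_eq_conjTranspose, e2] at p2
    rw [← Matrix.star_eq_conjTranspose, e1] at p1
    have d2 : 0 ≤ (star U * B * U - Matrix.diagonal (Complex.ofReal ∘ lam)) i i := by
      exact p2.diag_nonneg
    have d1 : 0 ≤ (Matrix.diagonal (Complex.ofReal ∘ lam) + star U * B * U) i i := by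
      exact p1.diag_nonneg
    rw [Matrix.sub_apply, Matrix.diagonal_apply_eq] at d2
    rw [Matrix.add_apply, Matrix.diagonal_apply_eq] at d1
    rw [Complex.le_def] at d1 d2
    simp only [Complex.sub_re, Complex.add_re, Complex.ofReal_re, Complex.zero_re,
      Function.comp_apply] at d1 d2
    rw [abs_le]
    constructor <;> linarith [d1.1, d2.1]
  have htrB : (star U * B * U).trace = B.trace := by
    rw [Matrix.trace_mul_cycle, hUUs, Matrix.one_mul]
  rw [hTN, ← htrB, Matrix.trace, Complex.re_sum]
  exact Finset.sum_le_sum fun i _ => hdiag i
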